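/- Local Lipschitz estimate for the consensus drift: Let E : ℝ^d → ℝ satisfy |E(x) − E(y)| ≤ L_E (1 + |x| + |y|) |x − y| for all x, y, and let R > 0. Set Ē_R = max_{|x| ≤ R} E(x) and 𝔼_R = min_{|x| ≤ R} E(x). Then for all X, X̂ ∈ (ℝ^d)^N with |X|, |X̂| ≤ R and every i ∈ {1,…,N}, |F^i(X) − F^i(X̂)| ≤ 2 (2 + R L_E (1 + 2R) α exp(α(Ē_R − 𝔼_R))) · max_j |X^j − X̂^j|, where F^i(X) = X^i − X_α(X) and X_α(X) = (Σ_j X^j e^{-αE(X^j)}) / (Σ_j e^{-αE(X^j)}). -/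

import Mathlib

open Finset Metric

private lemma exp_lip {α m a b : ℝ} (hα : 0 ≤ α) (ha : m ≤ a) (hb : m ≤ b) :
    |Real.exp (-α * a) - Real.exp (-α * b)| ≤ α * Real.exp (-α * m) * |a - b| := by
  wlog h : b ≤ a generalizing a b
  · rw [abs_sub_comm, abs_sub_comm a b]
    exact this hb ha (le_of_not_ge h)
  have hexp : Real.exp (-α * a) ≤ Real.exp (-α * b) :=
    Real.exp_le_exp.mpr (by nlinarith)
  rw [abs_of_nonpos (by linarith), abs_of_nonneg (by linarith)]
  have h1 : Real.exp (-α * a) = Real.exp (-α * b) * Real.exp (-(α * (a - b))) := by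
    rw [← Real.exp_add]; ring_nf
  have h2 : 1 - Real.exp (-(α * (a - b))) ≤ α * (a - b) := by
    nlinarith [Real.add_one_le_exp (-(α * (a - b)))]
  have ht : 0 ≤ α * (a - b) := mul_nonneg hα (by linarith)
  have h3 : Real.exp (-α * b) ≤ Real.exp (-α * m) :=
    Real.exp_le_exp.mpr (by nlinarith)
  rw [h1]
  nlinarith [mul_le_mul_of_nonneg_left h2 (Real.exp_pos (-α * b)).le,
    mul_le_mul_of_nonneg_right h3 ht]

private lemma consensus_est {V : Type*} [NormedAddCommGroup V] [NormedSpace ℝ V]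
    {N : ℕ} (hN : 0 < N) (w wh : Fin N → ℝ) (X Xh : Fin N → V)
    {R M D e : ℝ} (hR0 : 0 ≤ R) (hD0 : 0 ≤ D) (he : 0 < e)
    (hw : ∀ j, e ≤ w j) (hwh : ∀ j, e ≤ wh j)
    (hXhR : ∀ j, ‖Xh j‖ ≤ R)
    (hMj : ∀ j, ‖X j - Xh j‖ ≤ M)
    (hdiff : ∀ j, |w j - wh j| ≤ D) :
    ‖(∑ j, w j)⁻¹ • ∑ j, w j • X j - (∑ j, wh j)⁻¹ • ∑ j, wh j • Xh j‖
      ≤ M + 2 * (D * R / e) := by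
  have hNe : Nonempty (Fin N) := ⟨⟨0, hN⟩⟩
  have hNpos : (0:ℝ) < N := Nat.cast_pos.mpr hN
  set S := ∑ j, w j with hSdef
  set Sh := ∑ j, wh j with hShdef
  have hwpos : ∀ j, 0 < w j := fun j => lt_of_lt_of_le he (hw j)
  have hwhpos : ∀ j, 0 < wh j := fun j => lt_of_lt_of_le he (hwh j)
  have hSpos : 0 < S := Finset.sum_pos (fun j _ => hwpos j) univ_nonempty
  have hShpos : 0 < Sh := Finset.sum_pos (fun j _ => hwhpos j) univ_nonempty
  have hSlb : (N : ℝ) * e ≤ S := by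
    calc (N : ℝ) * e = ∑ _j : Fin N, e := by
          simp [Finset.sum_const, mul_comm]
      _ ≤ S := Finset.sum_le_sum fun j _ => hw j
  have hShlb : (N : ℝ) * e ≤ Sh := by
    calc (N : ℝ) * e = ∑ _j : Fin N, e := by
          simp [Finset.sum_const, mul_comm]
      _ ≤ Sh := Finset.sum_le_sum fun j _ => hwh j
  have hid : S⁻¹ • ∑ j, w j • X j - Sh⁻¹ • ∑ j, wh j • Xh j =
      S⁻¹ • (∑ j, w j • (X j - Xh j)) + S⁻¹ • (∑ j, (w j - wh j) • Xh j)
        + (S⁻¹ - Sh⁻¹) • (∑ j, wh j • Xh j) := by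
    have e1 : ∑ j, w j • (X j - Xh j) = (∑ j, w j • X j) - ∑ j, w j • Xh j := by
      rw [← Finset.sum_sub_distrib]
      exact Finset.sum_congr rfl fun j _ => smul_sub _ _ _
    have e2 : ∑ j, (w j - wh j) • Xh j = (∑ j, w j • Xh j) - ∑ j, wh j • Xh j := by
      rw [← Finset.sum_sub_distrib]
      exact Finset.sum_congr rfl fun j _ => sub_smul _ _ _
    rw [e1, e2]
    module
  rw [hid]
  have hT1 : ‖S⁻¹ • ∑ j, w j • (X j - Xh j)‖ ≤ M := by
    rw [norm_smul, Real.norm_eq_abs, abs_of_pos (inv_pos.mpr hSpos)]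
    have h1 : ‖∑ j, w j • (X j - Xh j)‖ ≤ S * M := by
      calc ‖∑ j, w j • (X j - Xh j)‖ ≤ ∑ j, ‖w j • (X j - Xh j)‖ := norm_sum_le _ _
        _ ≤ ∑ j, w j * M := Finset.sum_le_sum fun j _ => by
            rw [norm_smul, Real.norm_eq_abs, abs_of_pos (hwpos j)]
            exact mul_le_mul_of_nonneg_left (hMj j) (hwpos j).le
        _ = S * M := by rw [← Finset.sum_mul]
    calc S⁻¹ * ‖∑ j, w j • (X j - Xh j)‖ ≤ S⁻¹ * (S * M) :=
          mul_le_mul_of_nonneg_left h1 (inv_pos.mpr hSpos).le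
      _ = M := by field_simp
  have hT2 : ‖S⁻¹ • ∑ j, (w j - wh j) • Xh j‖ ≤ D * R / e := by
    rw [norm_smul, Real.norm_eq_abs, abs_of_pos (inv_pos.mpr hSpos)]
    have h1 : ‖∑ j, (w j - wh j) • Xh j‖ ≤ (N : ℝ) * (D * R) := by
      calc ‖∑ j, (w j - wh j) • Xh j‖ ≤ ∑ j, ‖(w j - wh j) • Xh j‖ := norm_sum_le _ _
        _ ≤ ∑ _j : Fin N, D * R := Finset.sum_le_sum fun j _ => by
            rw [norm_smul, Real.norm_eq_abs]
            exact mul_le_mul (hdiff j) (hXhR j) (norm_nonneg _) hD0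
        _ = (N : ℝ) * (D * R) := by simp [Finset.sum_const, mul_comm]
    calc S⁻¹ * ‖∑ j, (w j - wh j) • Xh j‖ ≤ S⁻¹ * ((N : ℝ) * (D * R)) :=
          mul_le_mul_of_nonneg_left h1 (inv_pos.mpr hSpos).le
      _ ≤ ((N : ℝ) * e)⁻¹ * ((N : ℝ) * (D * R)) := by
          gcongr
      _ = D * R / e := by field_simp
  have hSd : |Sh - S| ≤ (N : ℝ) * D := by
    have h0 : Sh - S = ∑ j, (wh j - w j) := by rw [Finset.sum_sub_distrib]
    rw [h0]
    calc |∑ j, (wh j - w j)| ≤ ∑ j, |wh j - w j| := Finset.abs_sum_le_sum_abs _ _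
      _ ≤ ∑ _j : Fin N, D := Finset.sum_le_sum fun j _ => by
          rw [abs_sub_comm]; exact hdiff j
      _ = (N : ℝ) * D := by simp [Finset.sum_const, mul_comm]
  have hT3 : ‖(S⁻¹ - Sh⁻¹) • ∑ j, wh j • Xh j‖ ≤ D * R / e := by
    rw [norm_smul, Real.norm_eq_abs]
    have h5 : S⁻¹ - Sh⁻¹ = (Sh - S) / (S * Sh) := by
      field_simp
    rw [h5, abs_div, abs_of_pos (mul_pos hSpos hShpos)]
    have hBn : ‖∑ j, wh j • Xh j‖ ≤ Sh * R := by
      calc ‖∑ j, wh j • Xh j‖ ≤ ∑ j, ‖wh j • Xh j‖ := norm_sum_le _ _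
        _ ≤ ∑ j, wh j * R := Finset.sum_le_sum fun j _ => by
            rw [norm_smul, Real.norm_eq_abs, abs_of_pos (hwhpos j)]
            exact mul_le_mul_of_nonneg_left (hXhR j) (hwhpos j).le
        _ = Sh * R := by rw [← Finset.sum_mul]
    calc |Sh - S| / (S * Sh) * ‖∑ j, wh j • Xh j‖
        ≤ |Sh - S| / (S * Sh) * (Sh * R) := by
          gcongr
      _ = |Sh - S| * R / S := by field_simp
      _ ≤ ((N : ℝ) * D) * R / ((N : ℝ) * e) := by
          gcongr
      _ = D * R / e := by field_simp
  calc ‖S⁻¹ • (∑ j, w j • (X j - Xh j)) + S⁻¹ • (∑ j, (w j - wh j) • Xh j)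
        + (S⁻¹ - Sh⁻¹) • (∑ j, wh j • Xh j)‖
      ≤ ‖S⁻¹ • ∑ j, w j • (X j - Xh j)‖ + ‖S⁻¹ • ∑ j, (w j - wh j) • Xh j‖
        + ‖(S⁻¹ - Sh⁻¹) • ∑ j, wh j • Xh j‖ := norm_add₃_le
    _ ≤ M + (D * R / e) + (D * R / e) := by gcongr
    _ = M + 2 * (D * R / e) := by ring

/-- **local Lipschitz estimate for the consensus drift.**
If `|E(x) − E(y)| ≤ L_E (1 + |x| + |y|)|x − y|`, then for all particle configurations
`X, X̂ ∈ (ℝ^d)^N` with Euclidean norms bounded by `R`, the drifts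
`F^i(X) = X^i − X_α(X)` satisfy
`|F^i(X) − F^i(X̂)| ≤ 2(2 + R L_E (1+2R) α e^{α(Ē_R − 𝔼_R)}) max_j |X^j − X̂^j|`,
with `Ē_R = max_{|x|≤R} E x` and `𝔼_R = min_{|x|≤R} E x`. -/
theorem stmt3 {d N : ℕ} (hN : 0 < N) (α : ℝ) (hα : 0 < α)
    (E : EuclideanSpace ℝ (Fin d) → ℝ) (LE : ℝ)
    (hLip : ∀ x y : EuclideanSpace ℝ (Fin d),
      |E x - E y| ≤ LE * (1 + ‖x‖ + ‖y‖) * ‖x - y‖)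
    (R : ℝ) (hR : 0 < R)
    (X Xh : Fin N → EuclideanSpace ℝ (Fin d))
    (hX : Real.sqrt (∑ j, ‖X j‖ ^ 2) ≤ R)
    (hXh : Real.sqrt (∑ j, ‖Xh j‖ ^ 2) ≤ R) :
    ∀ i : Fin N,
      let Xα : (Fin N → EuclideanSpace ℝ (Fin d)) → EuclideanSpace ℝ (Fin d) :=
        fun Y => (∑ j, Real.exp (-α * E (Y j)))⁻¹ • ∑ j, Real.exp (-α * E (Y j)) • Y j
      let F : (Fin N → EuclideanSpace ℝ (Fin d)) → Fin N → EuclideanSpace ℝ (Fin d) :=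
        fun Y i => Y i - Xα Y
      let EbarR : ℝ := sSup (E '' closedBall 0 R)
      let EunderR : ℝ := sInf (E '' closedBall 0 R)
      ‖F X i - F Xh i‖ ≤
        2 * (2 + R * LE * (1 + 2 * R) * α * Real.exp (α * (EbarR - EunderR))) *
          (⨆ j : Fin N, ‖X j - Xh j‖) := by
  have hNe : Nonempty (Fin N) := ⟨⟨0, hN⟩⟩
  intro i Xα F EbarR EunderR
  have hFdef : ∀ Y, F Y i = Y i - Xα Y := fun _ => rfl
  by_cases hd : d = 0
  · subst hd
    have hz : ∀ v : EuclideanSpace ℝ (Fin 0), ‖v‖ = 0 := fun v => by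
      simp [EuclideanSpace.norm_eq]
    haveI : Subsingleton (EuclideanSpace ℝ (Fin 0)) :=
      ⟨fun a b => (norm_eq_zero.mp (hz a)).trans (norm_eq_zero.mp (hz b)).symm⟩
    have hXX : Xh = X := Subsingleton.elim _ _
    subst hXX
    simp [hFdef, sub_self, ciSup_const]
  -- main case : d ≠ 0
  have hLE : 0 ≤ LE := by
    have hx := hLip (EuclideanSpace.single (⟨0, Nat.pos_of_ne_zero hd⟩ : Fin d) (1:ℝ)) 0
    simp [EuclideanSpace.norm_single] at hx
    nlinarith [abs_nonneg (E (EuclideanSpace.single (⟨0, Nat.pos_of_ne_zero hd⟩ : Fin d) (1:ℝ)) - E 0)]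
  have hXR : ∀ j, ‖X j‖ ≤ R := by
    intro j
    have h1 : ‖X j‖ ^ 2 ≤ ∑ k, ‖X k‖ ^ 2 :=
      Finset.single_le_sum (f := fun k => ‖X k‖ ^ 2) (fun k _ => sq_nonneg _) (mem_univ j)
    calc ‖X j‖ = Real.sqrt (‖X j‖ ^ 2) := (Real.sqrt_sq (norm_nonneg _)).symm
      _ ≤ Real.sqrt (∑ k, ‖X k‖ ^ 2) := Real.sqrt_le_sqrt h1
      _ ≤ R := hX
  have hXhR : ∀ j, ‖Xh j‖ ≤ R := by
    intro j
    have h1 : ‖Xh j‖ ^ 2 ≤ ∑ k, ‖Xh k‖ ^ 2 :=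
      Finset.single_le_sum (f := fun k => ‖Xh k‖ ^ 2) (fun k _ => sq_nonneg _) (mem_univ j)
    calc ‖Xh j‖ = Real.sqrt (‖Xh j‖ ^ 2) := (Real.sqrt_sq (norm_nonneg _)).symm
      _ ≤ Real.sqrt (∑ k, ‖Xh k‖ ^ 2) := Real.sqrt_le_sqrt h1
      _ ≤ R := hXh
  have hlipOn : LipschitzOnWith (Real.toNNReal (LE * (1 + 2 * R))) E
      (closedBall (0 : EuclideanSpace ℝ (Fin d)) R) := by
    rw [lipschitzOnWith_iff_dist_le_mul]
    intro x hx y hy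
    rw [mem_closedBall_zero_iff] at hx hy
    rw [Real.dist_eq, dist_eq_norm]
    calc |E x - E y| ≤ LE * (1 + ‖x‖ + ‖y‖) * ‖x - y‖ := hLip x y
      _ ≤ LE * (1 + 2 * R) * ‖x - y‖ := by
          apply mul_le_mul_of_nonneg_right _ (norm_nonneg _)
          apply mul_le_mul_of_nonneg_left _ hLE
          linarith
      _ = Real.toNNReal (LE * (1 + 2 * R)) * ‖x - y‖ := by
          rw [Real.coe_toNNReal _ (by nlinarith)]
  have hcomp : IsCompact (E '' closedBall (0 : EuclideanSpace ℝ (Fin d)) R) :=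
    (isCompact_closedBall (0 : EuclideanSpace ℝ (Fin d)) R).image_of_continuousOn
      hlipOn.continuousOn
  have hEub : ∀ x : EuclideanSpace ℝ (Fin d), ‖x‖ ≤ R → E x ≤ EbarR := fun x hx =>
    le_csSup hcomp.bddAbove ⟨x, mem_closedBall_zero_iff.mpr hx, rfl⟩
  have hElb : ∀ x : EuclideanSpace ℝ (Fin d), ‖x‖ ≤ R → EunderR ≤ E x := fun x hx =>
    csInf_le hcomp.bddBelow ⟨x, mem_closedBall_zero_iff.mpr hx, rfl⟩
  set M := ⨆ j : Fin N, ‖X j - Xh j‖ with hMdef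
  have hbdd : BddAbove (Set.range fun j : Fin N => ‖X j - Xh j‖) :=
    (Set.finite_range _).bddAbove
  have hMj : ∀ j, ‖X j - Xh j‖ ≤ M := fun j => le_ciSup hbdd j
  have hM0 : 0 ≤ M := le_trans (norm_nonneg _) (hMj i)
  set e := Real.exp (-α * EbarR) with hedef
  set D := α * Real.exp (-α * EunderR) * (LE * (1 + 2 * R) * M) with hDdef
  have he : 0 < e := Real.exp_pos _
  have hD0 : 0 ≤ D := by
    apply mul_nonneg (mul_nonneg hα.le (Real.exp_pos _).le)
    exact mul_nonneg (mul_nonneg hLE (by linarith)) hM0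
  have hw : ∀ j, e ≤ Real.exp (-α * E (X j)) := fun j =>
    Real.exp_le_exp.mpr (by nlinarith [hEub (X j) (hXR j)])
  have hwh : ∀ j, e ≤ Real.exp (-α * E (Xh j)) := fun j =>
    Real.exp_le_exp.mpr (by nlinarith [hEub (Xh j) (hXhR j)])
  have hdiff : ∀ j, |Real.exp (-α * E (X j)) - Real.exp (-α * E (Xh j))| ≤ D := by
    intro j
    have h1 := exp_lip hα.le (hElb (X j) (hXR j)) (hElb (Xh j) (hXhR j))
    have h2 : |E (X j) - E (Xh j)| ≤ LE * (1 + 2 * R) * M := by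
      calc |E (X j) - E (Xh j)| ≤ LE * (1 + ‖X j‖ + ‖Xh j‖) * ‖X j - Xh j‖ := hLip _ _
        _ ≤ LE * (1 + 2 * R) * ‖X j - Xh j‖ := by
            apply mul_le_mul_of_nonneg_right _ (norm_nonneg _)
            apply mul_le_mul_of_nonneg_left _ hLE
            linarith [hXR j, hXhR j]
        _ ≤ LE * (1 + 2 * R) * M :=
            mul_le_mul_of_nonneg_left (hMj j)
              (mul_nonneg hLE (by linarith))
    calc |Real.exp (-α * E (X j)) - Real.exp (-α * E (Xh j))|
        ≤ α * Real.exp (-α * EunderR) * |E (X j) - E (Xh j)| := h1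
      _ ≤ α * Real.exp (-α * EunderR) * (LE * (1 + 2 * R) * M) :=
          mul_le_mul_of_nonneg_left h2 (mul_nonneg hα.le (Real.exp_pos _).le)
  have hcore : ‖Xα X - Xα Xh‖ ≤ M + 2 * (D * R / e) :=
    consensus_est hN (fun j => Real.exp (-α * E (X j)))
      (fun j => Real.exp (-α * E (Xh j))) X Xh hR.le hD0 he hw hwh hXhR hMj hdiff
  have hDRe : D * R / e = R * LE * (1 + 2 * R) * α * Real.exp (α * (EbarR - EunderR)) * M := by
    have hee : Real.exp (α * (EbarR - EunderR)) =
        Real.exp (-α * EunderR) / Real.exp (-α * EbarR) := by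
      rw [← Real.exp_sub]; ring_nf
    rw [hDdef, hedef, hee]
    field_simp
  rw [hFdef, hFdef]
  calc ‖(X i - Xα X) - (Xh i - Xα Xh)‖
      = ‖(X i - Xh i) - (Xα X - Xα Xh)‖ := by rw [sub_sub_sub_comm]
    _ ≤ ‖X i - Xh i‖ + ‖Xα X - Xα Xh‖ := norm_sub_le _ _
    _ ≤ M + (M + 2 * (D * R / e)) := add_le_add (hMj i) hcore
    _ ≤ 2 * (2 + R * LE * (1 + 2 * R) * α * Real.exp (α * (EbarR - EunderR))) * M := by
        rw [hDRe]; nlinarith [hM0]
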